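/- Fix n ≥ 1, points c₁, …, c_M ∈ ℝⁿ, and radii r₁, …, r_M ∈ (0,1) such that |c_i − c_j| ≥ r_i for all i ≠ j. Define the affine maps T_i : ℝⁿ → ℝⁿ, x ↦ (x − c_i)/r_i, let ρ be Step-ReLU on ℝⁿ, and recursively define G_i : ℝⁿ → ℝⁿ by G₀ = id and G_i = T_i^{−1} ∘ ρ ∘ T_i ∘ G_{i−1}. Then for all i = 0, 1, …, M and all x ∈ ℝⁿ: G_i(x) = x if x ∉ ⋃_{j=1}^{i} B_{r_j}(c_j), and G_i(x) = c_j where j ≤ i is the smallest index with x ∈ B_{r_j}(c_j). -/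

import Mathlib

open scoped Classical
open Metric Set

noncomputable section

abbrev Euc (n : ℕ) := EuclideanSpace ℝ (Fin n)

/-- The standard inclusion ℝᵏ ↪ ℝˡ into the first k coordinates. -/
def incl (k l : ℕ) (v : Euc k) : Euc l :=
  WithLp.toLp 2 (fun j => if h : (j : ℕ) < k then v ⟨j, h⟩ else 0)

/-- Step-ReLU on ℝⁿ: v ↦ v if ‖v‖ ≥ 1, and v ↦ 0 if ‖v‖ < 1. -/
def stepReLU {n : ℕ} (v : Euc n) : Euc n := if 1 ≤ ‖v‖ then v else 0

/-- The recursively defined maps Gᵢ : ℝⁿ → ℝⁿ: G₀ = id and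
G_{i+1} = Tᵢ⁻¹ ∘ ρ ∘ Tᵢ ∘ Gᵢ, where Tᵢ(x) = (x − cᵢ)/rᵢ, Tᵢ⁻¹(x) = rᵢ x + cᵢ,
and ρ is Step-ReLU.  (Indices start at 0.) -/
def GmapFixed {n : ℕ} (c : ℕ → Euc n) (r : ℕ → ℝ) : ℕ → Euc n → Euc n
  | 0 => fun x => x
  | (i+1) => fun x =>
      r i • stepReLU ((r i)⁻¹ • (GmapFixed c r i x - c i)) + c i

lemma step_eq {n : ℕ} (r : ℝ) (hr : 0 < r) (c y : Euc n) :
    r • stepReLU (r⁻¹ • (y - c)) + c = if r ≤ dist y c then y else c := by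
  unfold stepReLU
  rw [norm_smul, norm_inv, Real.norm_eq_abs, abs_of_pos hr, dist_eq_norm]
  have hiff : 1 ≤ r⁻¹ * ‖y - c‖ ↔ r ≤ ‖y - c‖ := by
    rw [le_inv_mul_iff₀ hr, mul_one]
  by_cases h : r ≤ ‖y - c‖
  · rw [if_pos (hiff.mpr h), if_pos h, smul_smul, mul_inv_cancel₀ hr.ne', one_smul]
    abel
  · rw [if_neg (fun h' => h (hiff.mp h')), if_neg h, smul_zero, zero_add]

/-- Assume ‖cᵢ − cⱼ‖ ≥ rᵢ for i ≠ j.  Then for all i ≤ M and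
x ∈ ℝⁿ: if x lies in none of the balls B_{rⱼ}(cⱼ) with j < i then Gᵢ(x) = x; and if
j < i is the smallest index with x ∈ B_{rⱼ}(cⱼ) then Gᵢ(x) = cⱼ. -/
theorem GmapFixed_eq {n : ℕ} (hn : 1 ≤ n) (M : ℕ)
    (c : ℕ → Euc n) (r : ℕ → ℝ) (hr : ∀ j < M, r j ∈ Set.Ioo (0:ℝ) 1)
    (hsep : ∀ i < M, ∀ j < M, i ≠ j → r i ≤ dist (c i) (c j)) :
    ∀ i ≤ M, ∀ x : Euc n,
      ((∀ j < i, x ∉ Metric.ball (c j) (r j)) → GmapFixed c r i x = x) ∧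
      (∀ j < i, x ∈ Metric.ball (c j) (r j) → (∀ k < j, x ∉ Metric.ball (c k) (r k)) →
        GmapFixed c r i x = c j) := by
  intro i
  induction i with
  | zero => intro _ x; exact ⟨fun _ => rfl, fun j hj => absurd hj (Nat.not_lt_zero j)⟩
  | succ i ih =>
    intro hi x
    have hiM : i < M := hi
    have hri : 0 < r i := (hr i hiM).1
    obtain ⟨ih1, ih2⟩ := ih (le_of_lt hiM) x
    constructor
    · intro hnot
      have hGx : GmapFixed c r i x = x := ih1 fun j hj => hnot j (Nat.lt_succ_of_lt hj)
      show r i • stepReLU ((r i)⁻¹ • (GmapFixed c r i x - c i)) + c i = x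
      rw [hGx, step_eq _ hri, if_pos]
      exact not_lt.mp (fun h => hnot i (Nat.lt_succ_self i) (mem_ball.mpr h))
    · intro j hj hjball hjmin
      show r i • stepReLU ((r i)⁻¹ • (GmapFixed c r i x - c i)) + c i = c j
      rcases Nat.lt_or_ge j i with hji | hji
      · have hGx : GmapFixed c r i x = c j := ih2 j hji hjball hjmin
        rw [hGx, step_eq _ hri, if_pos]
        have := hsep i hiM j (hji.trans hiM) (Ne.symm (ne_of_lt hji))
        rwa [dist_comm]
      · have hji' : i = j := by omega
        subst hji'
        have hGx : GmapFixed c r i x = x := ih1 hjmin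
        rw [hGx, step_eq _ hri, if_neg]
        exact not_le.mpr (mem_ball.mp hjball)

end
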